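/- Let H, φ be differentiable distortion functions with positive derivatives such that φ ∘ H⁻¹ is concave (φ is less convex than H). If ∫_0^u Q_X(t) dH(t) ≥ ∫_0^u Q_Y(t) dH(t) for all u ∈ [0,1], then ∫_0^1 Q_X(t) dφ(t) ≥ ∫_0^1 Q_Y(t) dφ(t). -/

import Mathlib

open Set intervalIntegral MeasureTheory

lemma key_abel (f w : ℝ → ℝ)
    (hf : IntegrableOn f (Ioc 0 1))
    (hw : AntitoneOn w (Icc 0 1))
    (hw0 : ∀ t ∈ Icc (0:ℝ) 1, 0 ≤ w t)
    (hF : ∀ u ∈ Icc (0:ℝ) 1, 0 ≤ ∫ t in (0:ℝ)..u, f t) :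
    0 ≤ ∫ t in (0:ℝ)..1, f t * w t := by
  set v : ℝ → ℝ := fun t => w (max 0 (min 1 t)) - w 1 with hv_def
  have clamp_mem : ∀ t : ℝ, max 0 (min 1 t) ∈ Icc (0:ℝ) 1 :=
    fun t => ⟨le_max_left _ _, max_le zero_le_one (min_le_left _ _)⟩
  have clamp_mono : Monotone (fun t : ℝ => max 0 (min 1 t)) :=
    fun a b h => max_le_max le_rfl (min_le_min le_rfl h)
  have hv_anti : Antitone v :=
    fun a b h => sub_le_sub_right (hw (clamp_mem a) (clamp_mem b) (clamp_mono h)) _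
  have hv_meas : Measurable v := hv_anti.measurable
  have hv_nonneg : ∀ t, 0 ≤ v t :=
    fun t => sub_nonneg.2 (hw (clamp_mem t) (right_mem_Icc.2 zero_le_one) (clamp_mem t).2)
  set M := v 0 with hM_def
  have hv_le : ∀ t, v t ≤ M := by
    intro t
    rcases le_total 0 t with h | h
    · exact hv_anti h
    · have : max 0 (min 1 t) = 0 := by
        rw [min_eq_right (h.trans zero_le_one), max_eq_left h]
      simp only [hv_def, this, hM_def]
      norm_num
  have hM0 : 0 ≤ M := hv_nonneg 0
  -- clamp is identity on Ioc 0 1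
  have hclamp_id : ∀ t ∈ Icc (0:ℝ) 1, max 0 (min 1 t) = t := by
    intro t ht; rw [min_eq_right ht.2, max_eq_right ht.1]
  -- integrability of f * v
  have hfv : IntegrableOn (fun t => f t * v t) (Ioc 0 1) := by
    have h1 : Integrable (fun t => v t * f t) (volume.restrict (Ioc 0 1)) := by
      refine Integrable.bdd_mul (c := M) hf (hv_meas.aestronglyMeasurable) ?_
      refine Filter.Eventually.of_forall fun t => ?_
      rw [Real.norm_eq_abs, abs_of_nonneg (hv_nonneg t)]
      exact hv_le t
    simpa [mul_comm, IntegrableOn] using h1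
  rw [intervalIntegral.integral_of_le zero_le_one]
  have hsplit : ∀ t ∈ Ioc (0:ℝ) 1, f t * w t = f t * v t + w 1 * f t := by
    intro t ht
    have : max 0 (min 1 t) = t := hclamp_id t (Ioc_subset_Icc_self ht)
    simp only [hv_def, this]; ring
  rw [setIntegral_congr_fun measurableSet_Ioc hsplit,
    integral_add hfv (hf.const_mul _)]
  have hterm2 : 0 ≤ ∫ t in Ioc (0:ℝ) 1, w 1 * f t := by
    rw [MeasureTheory.integral_const_mul]
    have h1 := hF 1 (right_mem_Icc.2 zero_le_one)
    rw [intervalIntegral.integral_of_le zero_le_one] at h1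
    exact mul_nonneg (hw0 1 (right_mem_Icc.2 zero_le_one)) h1
  have hterm1 : 0 ≤ ∫ t in Ioc (0:ℝ) 1, f t * v t := by
    -- Fubini / layer-cake argument
    set g2 : ℝ → ℝ → ℝ := fun t s => f t * (Iio (v t)).indicator (fun _ => (1:ℝ)) s with hg2_def
    have hS : MeasurableSet {p : ℝ × ℝ | p.2 < v p.1} :=
      measurableSet_lt measurable_snd (hv_meas.comp measurable_fst)
    have huncurry : Function.uncurry g2 =
        fun p : ℝ × ℝ => f p.1 * ({p : ℝ × ℝ | p.2 < v p.1}).indicator (fun _ => (1:ℝ)) p := by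
      funext p
      simp only [Function.uncurry, hg2_def, Set.indicator_apply, mem_Iio, mem_setOf_eq]
    have hInt : Integrable (Function.uncurry g2)
        ((volume.restrict (Ioc (0:ℝ) 1)).prod (volume.restrict (Ioc (0:ℝ) M))) := by
      have hbound : Integrable (fun p : ℝ × ℝ => ‖f p.1‖ * (fun _ : ℝ => (1:ℝ)) p.2)
          ((volume.restrict (Ioc (0:ℝ) 1)).prod (volume.restrict (Ioc (0:ℝ) M))) := by
        have hc1 : IntegrableOn (fun _ : ℝ => (1:ℝ)) (Ioc (0:ℝ) M) volume :=
          (integrableOn_const_iff (C := (1:ℝ))).2 (Or.inr measure_Ioc_lt_top)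
        exact Integrable.mul_prod hf.norm hc1
      refine hbound.mono' ?_ ?_
      · rw [huncurry]
        exact (hf.aestronglyMeasurable.comp_fst).mul
          ((measurable_const.indicator hS).aestronglyMeasurable)
      · refine Filter.Eventually.of_forall fun p => ?_
        rw [huncurry]
        simp only [norm_mul, mul_one]
        refine mul_le_of_le_one_right (norm_nonneg _) ?_
        by_cases h : p ∈ {p : ℝ × ℝ | p.2 < v p.1} <;>
          simp [Set.indicator_apply, h]
    have hinner : ∀ t ∈ Ioc (0:ℝ) 1, (∫ s in Ioc (0:ℝ) M, g2 t s) = f t * v t := by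
      intro t _
      simp only [hg2_def]
      rw [MeasureTheory.integral_const_mul, setIntegral_indicator measurableSet_Iio]
      have hset : Ioc (0:ℝ) M ∩ Iio (v t) = Ioo 0 (v t) := by
        ext s
        simp only [mem_inter_iff, mem_Ioc, mem_Iio, mem_Ioo]
        constructor
        · rintro ⟨⟨h1, _⟩, h2⟩; exact ⟨h1, h2⟩
        · rintro ⟨h1, h2⟩; exact ⟨⟨h1, h2.le.trans (hv_le t)⟩, h2⟩
      rw [hset, setIntegral_const, Real.volume_real_Ioo_of_le (hv_nonneg t), sub_zero, smul_eq_mul,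
        mul_one]
    rw [← setIntegral_congr_fun measurableSet_Ioc hinner]
    rw [show (∫ t in Ioc (0:ℝ) 1, ∫ s in Ioc (0:ℝ) M, g2 t s) =
        ∫ s in Ioc (0:ℝ) M, ∫ t in Ioc (0:ℝ) 1, g2 t s from integral_integral_swap hInt]
    refine setIntegral_nonneg measurableSet_Ioc fun s hs => ?_
    -- inner integral for fixed s
    set A : Set ℝ := insert (0:ℝ) {t ∈ Icc (0:ℝ) 1 | s < v t} with hA_def
    have hA_ne : A.Nonempty := ⟨0, mem_insert _ _⟩
    have hA_bdd : BddAbove A := by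
      refine ⟨1, ?_⟩
      rintro x (rfl | ⟨hx, _⟩)
      · exact zero_le_one
      · exact hx.2
    set c := sSup A with hc_def
    have hc1 : c ≤ 1 := by
      refine csSup_le hA_ne ?_
      rintro x (rfl | ⟨hx, _⟩)
      · exact zero_le_one
      · exact hx.2
    have hc0 : 0 ≤ c := le_csSup hA_bdd (mem_insert _ _)
    have hne_c : ∀ᵐ t ∂volume.restrict (Ioc (0:ℝ) 1), t ≠ c := by
      have h1 : ∀ᵐ t : ℝ ∂volume, t ≠ c := by
        rw [MeasureTheory.ae_iff]
        have : {t : ℝ | ¬ t ≠ c} = {c} := by ext t; simp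
        rw [this]
        exact measure_singleton c
      exact h1.filter_mono (MeasureTheory.ae_mono Measure.restrict_le_self)
    have hcongr : ∀ᵐ t ∂volume.restrict (Ioc (0:ℝ) 1),
        g2 t s = (Ioc 0 c).indicator f t := by
      filter_upwards [ae_restrict_mem measurableSet_Ioc, hne_c] with t ht htc
      by_cases hlt : s < v t
      · have htA : t ∈ A := mem_insert_of_mem _ ⟨Ioc_subset_Icc_self ht, hlt⟩
        have htc' : t ∈ Ioc (0:ℝ) c := ⟨ht.1, le_csSup hA_bdd htA⟩
        simp [hg2_def, Set.indicator_apply, hlt, htc']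
      · have htc' : t ∉ Ioc (0:ℝ) c := by
          rintro ⟨ht0, htcle⟩
          have htlt : t < c := lt_of_le_of_ne htcle htc
          obtain ⟨u, huA, htu⟩ := exists_lt_of_lt_csSup hA_ne htlt
          rcases huA with rfl | ⟨_, hsu⟩
          · exact absurd htu (not_lt.2 ht0.le)
          · exact hlt (lt_of_lt_of_le hsu (hv_anti htu.le))
        simp [hg2_def, Set.indicator_apply, hlt, htc']
    rw [integral_congr_ae hcongr, setIntegral_indicator measurableSet_Ioc,
      inter_eq_self_of_subset_right (Ioc_subset_Ioc_right hc1)]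
    have := hF c ⟨hc0, hc1⟩
    rwa [intervalIntegral.integral_of_le hc0] at this
  linarith


lemma aux_w_anti (H φ Hinv : ℝ → ℝ)
    (hHdiff : Differentiable ℝ H) (hφdiff : Differentiable ℝ φ)
    (hH0 : H 0 = 0) (hH1 : H 1 = 1)
    (hH' : ∀ t ∈ Icc (0:ℝ) 1, 0 < deriv H t)
    (hinv₂ : ∀ t ∈ Icc (0:ℝ) 1, Hinv (H t) = t)
    (hconc : ConcaveOn ℝ (Icc 0 1) (φ ∘ Hinv)) :
    AntitoneOn (fun t => deriv φ t / deriv H t) (Icc (0:ℝ) 1) := by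
  -- H is strictly monotone on [0,1], maps into [0,1]
  have hHmono : StrictMonoOn H (Icc 0 1) := by
    refine strictMonoOn_of_deriv_pos (convex_Icc 0 1) hHdiff.continuous.continuousOn ?_
    intro x hx
    rw [interior_Icc] at hx
    exact hH' x (Ioo_subset_Icc_self hx)
  have hHmaps : ∀ t ∈ Icc (0:ℝ) 1, H t ∈ Icc (0:ℝ) 1 := by
    intro t ht
    constructor
    · rw [← hH0]
      rcases eq_or_lt_of_le ht.1 with h | h
      · rw [← h]
      · exact (hHmono (left_mem_Icc.2 zero_le_one) ht h).le
    · rw [← hH1]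
      rcases eq_or_lt_of_le ht.2 with h | h
      · rw [h]
      · exact (hHmono ht (right_mem_Icc.2 zero_le_one) h).le
  -- secant slopes of φ w.r.t. H
  set K : ℝ → ℝ → ℝ := fun a b => (φ b - φ a) / (H b - H a) with hK_def
  have hg : ConvexOn ℝ (Icc (0:ℝ) 1) (-(φ ∘ Hinv)) := hconc.neg
  have hval : ∀ a ∈ Icc (0:ℝ) 1, (-(φ ∘ Hinv)) (H a) = -φ a := by
    intro a ha
    simp [Function.comp, hinv₂ a ha]
  -- three-point inequalities for K
  have hK3 : ∀ x ∈ Icc (0:ℝ) 1, ∀ t ∈ Icc (0:ℝ) 1, ∀ y ∈ Icc (0:ℝ) 1,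
      x < t → t < y → K t y ≤ K x y ∧ K x y ≤ K x t := by
    intro x hx t ht y hy hxt hty
    have hHx := hHmaps x hx
    have hHt := hHmaps t ht
    have hHy := hHmaps y hy
    have hxt' : H x < H t := hHmono hx ht hxt
    have hty' : H t < H y := hHmono ht hy hty
    have hxy' : H x < H y := hxt'.trans hty'
    constructor
    · have h := hg.secant_mono (a := H y) (x := H x) (y := H t) hHy hHx hHt
        (ne_of_lt hxy') (ne_of_lt hty') hxt'.le
      rw [hval x hx, hval t ht, hval y hy] at h
      have e1 : (-φ x - -φ y) / (H x - H y) = -K x y := by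
        rw [hK_def]
        rw [show H x - H y = -(H y - H x) by ring, div_neg]
        ring_nf
      have e2 : (-φ t - -φ y) / (H t - H y) = -K t y := by
        rw [hK_def]
        rw [show H t - H y = -(H y - H t) by ring, div_neg]
        ring_nf
      rw [e1, e2] at h
      linarith
    · have h := hg.secant_mono (a := H x) (x := H t) (y := H y) hHx hHt hHy
        (ne_of_gt hxt') (ne_of_gt hxy') hty'.le
      rw [hval x hx, hval t ht, hval y hy] at h
      have e1 : (-φ t - -φ x) / (H t - H x) = -K x t := by
        rw [hK_def]; ring_nf
      have e2 : (-φ y - -φ x) / (H y - H x) = -K x y := by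
        rw [hK_def]; ring_nf
      rw [e1, e2] at h
      linarith
  intro x hx y hy hxy
  rcases eq_or_lt_of_le hxy with rfl | hxy
  · exact le_refl _
  -- w x ≥ K x y
  have hslope_eq : ∀ a ∈ Icc (0:ℝ) 1, ∀ b, b ≠ a → slope φ a b / slope H a b = K a b := by
    intro a _ b hba
    rw [slope_def_field, slope_def_field, hK_def, div_div_div_cancel_right₀ (sub_ne_zero.2 hba)]
  have hwx : K x y ≤ deriv φ x / deriv H x := by
    have hd : Filter.Tendsto (fun t => slope φ x t / slope H x t) (nhdsWithin x (Ioi x))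
        (nhds (deriv φ x / deriv H x)) := by
      have hd0 : Filter.Tendsto (fun t => slope φ x t / slope H x t) (nhdsWithin x {x}ᶜ)
          (nhds (deriv φ x / deriv H x)) :=
        ((hasDerivAt_iff_tendsto_slope.1 (hφdiff x).hasDerivAt).div
          (hasDerivAt_iff_tendsto_slope.1 (hHdiff x).hasDerivAt) (ne_of_gt (hH' x hx)))
      have hsub : Ioi x ⊆ ({x}ᶜ : Set ℝ) := fun t ht => mem_compl_singleton_iff.2 (ne_of_gt ht)
      exact hd0.mono_left (nhdsWithin_mono x hsub)
    refine ge_of_tendsto hd ?_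
    filter_upwards [Ioo_mem_nhdsGT_of_mem ⟨le_refl x, hxy⟩] with t ht
    have htI : t ∈ Icc (0:ℝ) 1 := ⟨hx.1.trans ht.1.le, ht.2.le.trans hy.2⟩
    rw [hslope_eq x hx t (ne_of_gt ht.1)]
    exact (hK3 x hx t htI y hy ht.1 ht.2).2
  have hwy : deriv φ y / deriv H y ≤ K x y := by
    have hd : Filter.Tendsto (fun t => slope φ y t / slope H y t) (nhdsWithin y (Iio y))
        (nhds (deriv φ y / deriv H y)) := by
      have hd0 : Filter.Tendsto (fun t => slope φ y t / slope H y t) (nhdsWithin y {y}ᶜ)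
          (nhds (deriv φ y / deriv H y)) :=
        ((hasDerivAt_iff_tendsto_slope.1 (hφdiff y).hasDerivAt).div
          (hasDerivAt_iff_tendsto_slope.1 (hHdiff y).hasDerivAt) (ne_of_gt (hH' y hy)))
      have hsub : Iio y ⊆ ({y}ᶜ : Set ℝ) := fun t ht => mem_compl_singleton_iff.2 (ne_of_lt ht)
      exact hd0.mono_left (nhdsWithin_mono y hsub)
    refine le_of_tendsto hd ?_
    filter_upwards [Ioo_mem_nhdsLT_of_mem ⟨hxy, le_refl y⟩] with t ht
    have htI : t ∈ Icc (0:ℝ) 1 := ⟨hx.1.trans ht.1.le, ht.2.le.trans hy.2⟩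
    rw [hslope_eq y hy t (ne_of_lt ht.2)]
    have := (hK3 x hx t htI y hy ht.1 ht.2).1
    -- K t y vs slope at y: slope φ y t / slope H y t = K y t, and K y t = K t y
    have hsym : K y t = K t y := by
      simp only [hK_def]
      rw [show φ t - φ y = -(φ y - φ t) by ring, show H t - H y = -(H y - H t) by ring,
        neg_div_neg_eq]
    rw [hsym]
    exact this
  exact le_trans hwy hwx


lemma aux_bdd (Q : ℝ → ℝ) (hQ : MonotoneOn Q (Icc 0 1)) :
    ∀ᵐ t ∂volume.restrict (Ioc (0:ℝ) 1), ‖Q t‖ ≤ max ‖Q 0‖ ‖Q 1‖ := by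
  filter_upwards [ae_restrict_mem measurableSet_Ioc] with t ht
  have htI : t ∈ Icc (0:ℝ) 1 := Ioc_subset_Icc_self ht
  have h01 : (0:ℝ) ∈ Icc (0:ℝ) 1 := left_mem_Icc.2 zero_le_one
  have h11 : (1:ℝ) ∈ Icc (0:ℝ) 1 := right_mem_Icc.2 zero_le_one
  have h1 := hQ h01 htI htI.1
  have h2 := hQ htI h11 htI.2
  simp only [Real.norm_eq_abs]
  rw [abs_le]
  constructor
  · calc -(max |Q 0| |Q 1|) ≤ -|Q 0| := neg_le_neg (le_max_left _ _)
      _ ≤ Q 0 := neg_abs_le _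
      _ ≤ Q t := h1
  · calc Q t ≤ Q 1 := h2
      _ ≤ |Q 1| := le_abs_self _
      _ ≤ max |Q 0| |Q 1| := le_max_right _ _

lemma aux_mul_int (Q g : ℝ → ℝ) (hQ : MonotoneOn Q (Icc 0 1))
    (hQm : AEStronglyMeasurable Q (volume.restrict (Ioc 0 1)))
    (hg : IntegrableOn g (Ioc 0 1)) :
    IntegrableOn (fun t => Q t * g t) (Ioc 0 1) :=
  Integrable.bdd_mul hg hQm (aux_bdd Q hQ)


/-- If `φ` is less convex than `H` (i.e. `φ ∘ H⁻¹` is concave), then the distorted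
expectation with weight `dφ` preserves `H`-distorted stochastic dominance. -/
theorem stmt_16 (H φ Hinv : ℝ → ℝ)
    (hHdiff : Differentiable ℝ H) (hφdiff : Differentiable ℝ φ)
    (hH0 : H 0 = 0) (hH1 : H 1 = 1) (hφ0 : φ 0 = 0) (hφ1 : φ 1 = 1)
    (hH' : ∀ t ∈ Icc (0:ℝ) 1, 0 < deriv H t) (hφ' : ∀ t ∈ Icc (0:ℝ) 1, 0 < deriv φ t)
    (hinv₁ : ∀ t ∈ Icc (0:ℝ) 1, H (Hinv t) = t)
    (hinv₂ : ∀ t ∈ Icc (0:ℝ) 1, Hinv (H t) = t)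
    (hinv_maps : MapsTo Hinv (Icc 0 1) (Icc 0 1))
    (hconc : ConcaveOn ℝ (Icc 0 1) (φ ∘ Hinv))
    (QX QY : ℝ → ℝ) (hQX : MonotoneOn QX (Icc 0 1)) (hQY : MonotoneOn QY (Icc 0 1))
    (hQXint : IntervalIntegrable QX MeasureTheory.volume 0 1)
    (hQYint : IntervalIntegrable QY MeasureTheory.volume 0 1)
    (hdom : ∀ u ∈ Icc (0:ℝ) 1,
      ∫ t in (0:ℝ)..u, QX t * deriv H t ≥ ∫ t in (0:ℝ)..u, QY t * deriv H t) :
    ∫ t in (0:ℝ)..1, QX t * deriv φ t ≥ ∫ t in (0:ℝ)..1, QY t * deriv φ t := by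
  have hHint : IntervalIntegrable (deriv H) volume 0 1 := by
    refine intervalIntegrable_deriv_of_nonneg hHdiff.continuous.continuousOn
      (fun x _ => (hHdiff x).hasDerivAt) ?_
    intro x hx
    rw [min_eq_left zero_le_one, max_eq_right zero_le_one] at hx
    exact (hH' x (Ioo_subset_Icc_self hx)).le
  have hφint : IntervalIntegrable (deriv φ) volume 0 1 := by
    refine intervalIntegrable_deriv_of_nonneg hφdiff.continuous.continuousOn
      (fun x _ => (hφdiff x).hasDerivAt) ?_
    intro x hx
    rw [min_eq_left zero_le_one, max_eq_right zero_le_one] at hx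
    exact (hφ' x (Ioo_subset_Icc_self hx)).le
  have hQXD : IntegrableOn (fun t => QX t * deriv H t) (Ioc 0 1) :=
    aux_mul_int QX (deriv H) hQX hQXint.1.aestronglyMeasurable hHint.1
  have hQYD : IntegrableOn (fun t => QY t * deriv H t) (Ioc 0 1) :=
    aux_mul_int QY (deriv H) hQY hQYint.1.aestronglyMeasurable hHint.1
  have hQXE : IntegrableOn (fun t => QX t * deriv φ t) (Ioc 0 1) :=
    aux_mul_int QX (deriv φ) hQX hQXint.1.aestronglyMeasurable hφint.1
  have hQYE : IntegrableOn (fun t => QY t * deriv φ t) (Ioc 0 1) :=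
    aux_mul_int QY (deriv φ) hQY hQYint.1.aestronglyMeasurable hφint.1
  have hQXD' : IntervalIntegrable (fun t => QX t * deriv H t) volume 0 1 :=
    (intervalIntegrable_iff_integrableOn_Ioc_of_le zero_le_one).2 hQXD
  have hQYD' : IntervalIntegrable (fun t => QY t * deriv H t) volume 0 1 :=
    (intervalIntegrable_iff_integrableOn_Ioc_of_le zero_le_one).2 hQYD
  have hQXE' : IntervalIntegrable (fun t => QX t * deriv φ t) volume 0 1 :=
    (intervalIntegrable_iff_integrableOn_Ioc_of_le zero_le_one).2 hQXE
  have hQYE' : IntervalIntegrable (fun t => QY t * deriv φ t) volume 0 1 :=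
    (intervalIntegrable_iff_integrableOn_Ioc_of_le zero_le_one).2 hQYE
  set f : ℝ → ℝ := fun t => QX t * deriv H t - QY t * deriv H t with hf_def
  set w : ℝ → ℝ := fun t => deriv φ t / deriv H t with hw_def
  have hf_int : IntegrableOn f (Ioc 0 1) := hQXD.sub hQYD
  have hw_anti : AntitoneOn w (Icc (0:ℝ) 1) :=
    aux_w_anti H φ Hinv hHdiff hφdiff hH0 hH1 hH' hinv₂ hconc
  have hw0 : ∀ t ∈ Icc (0:ℝ) 1, 0 ≤ w t :=
    fun t ht => div_nonneg (hφ' t ht).le (hH' t ht).le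
  have hF : ∀ u ∈ Icc (0:ℝ) 1, 0 ≤ ∫ t in (0:ℝ)..u, f t := by
    intro u hu
    have hsub : uIcc (0:ℝ) u ⊆ uIcc (0:ℝ) 1 := by
      rw [uIcc_of_le hu.1, uIcc_of_le zero_le_one]
      exact Icc_subset_Icc_right hu.2
    have i1 := hQXD'.mono_set hsub
    have i2 := hQYD'.mono_set hsub
    have heq : ∫ t in (0:ℝ)..u, f t =
        (∫ t in (0:ℝ)..u, QX t * deriv H t) - ∫ t in (0:ℝ)..u, QY t * deriv H t :=
      intervalIntegral.integral_sub i1 i2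
    rw [heq]
    exact sub_nonneg.2 (hdom u hu)
  have hkey := key_abel f w hf_int hw_anti hw0 hF
  rw [ge_iff_le, ← sub_nonneg, ← intervalIntegral.integral_sub hQXE' hQYE']
  have heq : (∫ t in (0:ℝ)..1, (QX t * deriv φ t - QY t * deriv φ t)) =
      ∫ t in (0:ℝ)..1, f t * w t := by
    rw [intervalIntegral.integral_of_le zero_le_one,
      intervalIntegral.integral_of_le zero_le_one]
    refine setIntegral_congr_fun measurableSet_Ioc fun t ht => ?_
    have hD : deriv H t ≠ 0 := ne_of_gt (hH' t (Ioc_subset_Icc_self ht))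
    simp only [hf_def, hw_def]
    field_simp
  rw [heq]
  exact hkey
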